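/- Let T be a tree and A a real symmetric matrix with graph T. Then at least two eigenvalues of A have multiplicity 1; in particular the smallest and the largest eigenvalues of A each have multiplicity 1. -/

import Mathlib

section TreeSimpleAux

open Matrix Polynomial Finset SimpleGraph

variable {n : ℕ}

lemma charpoly_conj_unit (U M : Matrix (Fin n) (Fin n) ℝ)
    (hU : U * star U = 1) (hU' : star U * U = 1) :
    (U * M * star U).charpoly = M.charpoly := by
  have hmap : ∀ P Q : Matrix (Fin n) (Fin n) ℝ,
      (C : ℝ →+* ℝ[X]).mapMatrix (P * Q) =
      (C : ℝ →+* ℝ[X]).mapMatrix P * (C : ℝ →+* ℝ[X]).mapMatrix Q := fun P Q => map_mul _ P Q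
  have key : charmatrix (U * M * star U) =
      ((C : ℝ →+* ℝ[X]).mapMatrix U) * charmatrix M * ((C : ℝ →+* ℝ[X]).mapMatrix (star U)) := by
    unfold charmatrix
    rw [Matrix.mul_sub, Matrix.sub_mul, hmap, hmap]
    congr 1
    rw [scalar_apply, ← smul_one_eq_diagonal, Matrix.mul_smul, Matrix.smul_mul, mul_one,
      ← hmap, hU, _root_.map_one]
  unfold Matrix.charpoly
  rw [key, det_mul, det_mul, mul_comm, ← mul_assoc, ← det_mul, ← hmap, hU', _root_.map_one, det_one,
    one_mul]

lemma charpoly_diag (d : Fin n → ℝ) :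
    (Matrix.diagonal d).charpoly = ∏ i, (X - C (d i)) := by
  have : charmatrix (Matrix.diagonal d) = Matrix.diagonal (fun i => X - C (d i)) := by
    ext i j
    by_cases h : i = j
    · subst h; simp
    · simp [h, Matrix.diagonal_apply_ne _ h]
  rw [Matrix.charpoly, this, det_diagonal]

lemma charpoly_eq_prod (A : Matrix (Fin n) (Fin n) ℝ) (hA : A.IsHermitian) :
    A.charpoly = ∏ i, (X - C (hA.eigenvalues i)) := by
  conv_lhs => rw [hA.spectral_theorem, Unitary.conjStarAlgAut_apply]
  rw [charpoly_conj_unit _ _ (Matrix.mem_unitaryGroup_iff.mp (hA.eigenvectorUnitary).2)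
      (Matrix.mem_unitaryGroup_iff'.mp (hA.eigenvectorUnitary).2)]
  have : (RCLike.ofReal ∘ hA.eigenvalues : Fin n → ℝ) = hA.eigenvalues := rfl
  rw [this, charpoly_diag]

lemma rootMult_prod (μ : Fin n → ℝ) (t : ℝ) :
    (∏ i, (X - C (μ i))).rootMultiplicity t = (Finset.univ.filter (fun i => μ i = t)).card := by
  classical
  rw [← Polynomial.count_roots]
  have h1 : (∏ i, (X - C (μ i))) = (Multiset.map (fun a => X - C a) (Finset.univ.val.map μ)).prod := by
    rw [Multiset.map_map]
    rfl
  rw [h1, Polynomial.roots_multiset_prod_X_sub_C, Multiset.count_map]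
  rw [Finset.card, Finset.filter_val]
  congr 1
  exact Multiset.filter_congr (fun x _ => eq_comm)

lemma exists_max (hn : 2 ≤ n) (f : Fin n → ℝ) : ∃ k, f k = ⨆ i, f i ∧ ∀ i, f i ≤ ⨆ i, f i := by
  have : Nonempty (Fin n) := ⟨⟨0, by omega⟩⟩
  obtain ⟨k, hk⟩ := Finite.exists_max f
  have hb : BddAbove (Set.range f) := (Set.finite_range f).bddAbove
  have h1 : (⨆ i, f i) = f k := le_antisymm (ciSup_le hk) (le_ciSup hb k)
  exact ⟨k, h1.symm, fun i => h1 ▸ hk i⟩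

lemma exists_min (hn : 2 ≤ n) (f : Fin n → ℝ) : ∃ k, f k = ⨅ i, f i ∧ ∀ i, ⨅ i, f i ≤ f i := by
  have : Nonempty (Fin n) := ⟨⟨0, by omega⟩⟩
  obtain ⟨k, hk⟩ := Finite.exists_min f
  have hb : BddBelow (Set.range f) := (Set.finite_range f).bddBelow
  have h1 : (⨅ i, f i) = f k := le_antisymm (ciInf_le hb k) (le_ciInf hk)
  exact ⟨k, h1.symm, fun i => h1 ▸ hk i⟩

lemma psd_sub_of_le (A : Matrix (Fin n) (Fin n) ℝ) (hA : A.IsHermitian) (lam : ℝ)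
    (h : ∀ k, hA.eigenvalues k ≤ lam) :
    (lam • (1 : Matrix (Fin n) (Fin n) ℝ) - A).PosSemidef := by
  have hU := Matrix.mem_unitaryGroup_iff.mp (hA.eigenvectorUnitary).2
  have key : lam • (1 : Matrix (Fin n) (Fin n) ℝ) - A =
      (hA.eigenvectorUnitary : Matrix (Fin n) (Fin n) ℝ) *
        Matrix.diagonal (fun k => lam - hA.eigenvalues k) *
        star (hA.eigenvectorUnitary : Matrix (Fin n) (Fin n) ℝ) := by
    conv_lhs => rw [hA.spectral_theorem, Unitary.conjStarAlgAut_apply]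
    have h1 : (Matrix.diagonal (fun k => lam - hA.eigenvalues k)) =
        lam • 1 - Matrix.diagonal (RCLike.ofReal ∘ hA.eigenvalues) := by
      ext i j
      by_cases hij : i = j
      · subst hij; simp
      · simp [Matrix.one_apply_ne hij, Matrix.diagonal_apply_ne _ hij]
    rw [h1, Matrix.mul_sub, Matrix.sub_mul, Matrix.mul_smul, mul_one, Matrix.smul_mul, hU]
  rw [key, Matrix.star_eq_conjTranspose]
  exact (Matrix.PosSemidef.diagonal (fun k => by simpa using h k)).mul_mul_conjTranspose_same _

noncomputable def wsgn (w : Fin n → Fin n → ℝ) {T : SimpleGraph (Fin n)} {u v : Fin n}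
    (p : T.Walk u v) : ℝ :=
  (p.darts.map (fun d => Real.sign (w d.toProd.1 d.toProd.2))).prod

lemma wsgn_append (w : Fin n → Fin n → ℝ) {T : SimpleGraph (Fin n)} {u v x : Fin n}
    (p : T.Walk u v) (q : T.Walk v x) :
    wsgn w (p.append q) = wsgn w p * wsgn w q := by
  unfold wsgn; rw [Walk.darts_append, List.map_append, List.prod_append]

lemma wsgn_concat (w : Fin n → Fin n → ℝ) {T : SimpleGraph (Fin n)} {u v x : Fin n}
    (p : T.Walk u v) (h : T.Adj v x) :
    wsgn w (p.concat h) = wsgn w p * Real.sign (w v x) := by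
  unfold wsgn
  rw [Walk.darts_concat, List.concat_eq_append, List.map_append, List.prod_append]
  simp

lemma wsgn_single (w : Fin n → Fin n → ℝ) {T : SimpleGraph (Fin n)} {u v : Fin n}
    (h : T.Adj u v) :
    wsgn w (Walk.cons h Walk.nil) = Real.sign (w u v) := by
  unfold wsgn; simp [Walk.darts_cons, Walk.darts_nil]

lemma wsgn_pm {w : Fin n → Fin n → ℝ} {T : SimpleGraph (Fin n)}
    (hw : ∀ i j, T.Adj i j → w i j ≠ 0) {u v : Fin n} (p : T.Walk u v) :
    wsgn w p = 1 ∨ wsgn w p = -1 := by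
  induction p with
  | nil => left; rfl
  | cons h q ih =>
      rename_i a b c
      have hc : wsgn w (Walk.cons h q) = Real.sign (w a b) * wsgn w q := by
        unfold wsgn; simp [Walk.darts_cons]
      rcases Real.sign_apply_eq_of_ne_zero _ (hw _ _ h) with h1 | h1 <;>
        rcases ih with h2 | h2 <;> rw [hc, h1, h2] <;> norm_num

lemma exists_sign (T : SimpleGraph (Fin n)) (hT : T.IsTree) (w : Fin n → Fin n → ℝ)
    (hw : ∀ i j, T.Adj i j → w i j ≠ 0) (hsymm : ∀ i j, w i j = w j i) :
    ∃ s : Fin n → ℝ, (∀ i, s i = 1 ∨ s i = -1) ∧ ∀ i j, T.Adj i j → 0 < s i * s j * w i j := by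
  classical
  have hconn := hT.isConnected
  have hne : Nonempty (Fin n) := hconn.nonempty
  set r := Classical.arbitrary (Fin n) with hr
  choose P hP using fun v => (hT.existsUnique_path r v).exists
  refine ⟨fun v => wsgn w (P v), fun v => wsgn_pm hw _, ?_⟩
  intro i j hadj
  have hsgn2 : Real.sign (w i j) * Real.sign (w i j) = 1 := by
    rcases Real.sign_apply_eq_of_ne_zero _ (hw i j hadj) with h | h <;> rw [h] <;> norm_num
  have key : wsgn w (P j) = wsgn w (P i) * Real.sign (w i j) := by
    by_cases hj : j ∈ (P i).support
    · have h1 : ((P i).takeUntil j hj).IsPath := (hP i).takeUntil hj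
      have h2 : ((P i).dropUntil j hj).IsPath := (hP i).dropUntil hj
      have e1 : (P i).takeUntil j hj = P j :=
        (hT.existsUnique_path r j).unique h1 (hP j)
      have e2 : (P i).dropUntil j hj = Walk.cons hadj.symm Walk.nil :=
        (hT.existsUnique_path j i).unique h2 (SimpleGraph.Path.singleton hadj.symm).2
      have e3 := (P i).take_spec hj
      have h4 : wsgn w (P i) = wsgn w (P j) * Real.sign (w j i) := by
        rw [← e3, wsgn_append, e1, e2, wsgn_single]
      rw [h4, hsymm j i, mul_assoc, hsgn2, mul_one]
    · have h1 : ((P i).concat hadj).IsPath := by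
        rw [Walk.concat, SimpleGraph.Walk.isPath_def, Walk.support_append]
        refine List.Nodup.append ((hP i).support_nodup) (by simp [hadj.ne']) ?_
        intro a ha hb
        simp [Walk.support_cons, Walk.support_nil] at hb
        rcases hb with rfl
        exact hj ha
      have e1 : (P i).concat hadj = P j :=
        (hT.existsUnique_path r j).unique h1 (hP j)
      rw [← e1, wsgn_concat]
  simp only []
  rw [key]
  have h5 : wsgn w (P i) * (wsgn w (P i) * Real.sign (w i j)) * w i j
      = (wsgn w (P i) * wsgn w (P i)) * (Real.sign (w i j) * w i j) := by ring
  rw [h5]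
  have h6 : wsgn w (P i) * wsgn w (P i) = 1 := by
    rcases wsgn_pm hw (P i) with h | h <;> rw [h] <;> norm_num
  rw [h6, one_mul]
  exact Real.sign_mul_pos_of_ne_zero _ (hw i j hadj)

lemma core (T : SimpleGraph (Fin n)) (hconn : T.Connected)
    (A : Matrix (Fin n) (Fin n) ℝ)
    (hedge : ∀ i j, i ≠ j → ¬ T.Adj i j → A i j = 0)
    (s : Fin n → ℝ) (hs1 : ∀ i, s i = 1 ∨ s i = -1)
    (hpos : ∀ i j, T.Adj i j → 0 < s i * s j * A i j)
    (lam : ℝ) (hpsd : (lam • (1 : Matrix (Fin n) (Fin n) ℝ) - A).PosSemidef)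
    (x : Fin n → ℝ) (hx : A *ᵥ x = lam • x) (hx0 : x ≠ 0) :
    ∀ i, x i ≠ 0 := by
  classical
  have hss : ∀ i, s i * s i = 1 := fun i => by rcases hs1 i with h | h <;> rw [h] <;> norm_num
  have habs : ∀ i, |s i| = 1 := fun i => by rcases hs1 i with h | h <;> rw [h] <;> norm_num
  set D : Matrix (Fin n) (Fin n) ℝ := Matrix.diagonal s with hD
  set B : Matrix (Fin n) (Fin n) ℝ := D * A * D with hB
  have hBapp : ∀ i j, B i j = s i * s j * A i j := by
    intro i j
    rw [hB, hD]
    rw [Matrix.mul_diagonal, Matrix.diagonal_mul]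
    ring
  have hDD : D * D = 1 := by
    rw [hD, Matrix.diagonal_mul_diagonal]
    rw [show (fun i => s i * s i) = fun _ => (1:ℝ) from funext hss]
    exact Matrix.diagonal_one
  have hBoff : ∀ i j, i ≠ j → 0 ≤ B i j := by
    intro i j hij
    by_cases hadj : T.Adj i j
    · rw [hBapp]; exact (hpos i j hadj).le
    · rw [hBapp, hedge i j hij hadj]; ring_nf; exact le_refl 0
  have hBadj : ∀ i j, T.Adj i j → 0 < B i j := fun i j hadj => by
    rw [hBapp]; exact hpos i j hadj
  set x' : Fin n → ℝ := fun i => s i * x i with hx'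
  have hDx : D *ᵥ x = x' := by
    funext i; rw [hD, Matrix.mulVec_diagonal]
  have hBx' : B *ᵥ x' = lam • x' := by
    rw [← hDx, Matrix.mulVec_mulVec, mul_assoc, hDD, mul_one, ← Matrix.mulVec_mulVec, hx,
      Matrix.mulVec_smul, hDx]
  set y : Fin n → ℝ := fun i => |x i| with hy
  have hysq : ∀ i, y i * y i = x' i * x' i := by
    intro i
    have : |x' i| = y i := by rw [hx', hy]; simp [abs_mul, habs i]
    calc y i * y i = |x' i| * |x' i| := by rw [this]
    _ = x' i * x' i := by rw [← abs_mul, abs_mul_self]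
  have hynn : ∀ i, 0 ≤ y i := fun i => abs_nonneg _
  have hyabs : ∀ i, |x' i| = y i := by
    intro i; rw [hx', hy]; simp [abs_mul, habs i]
  -- PSD of lam•1 - B
  have hDH : D.conjTranspose = D := by
    rw [hD, Matrix.diagonal_conjTranspose,
      show star s = s from funext fun i => star_trivial _]
  have hpsdB : (lam • (1 : Matrix (Fin n) (Fin n) ℝ) - B).PosSemidef := by
    have h1 := hpsd.mul_mul_conjTranspose_same D
    rw [hDH] at h1
    have h2 : D * (lam • 1 - A) * D = lam • (1 : Matrix (Fin n) (Fin n) ℝ) - B := by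
      rw [Matrix.mul_sub, Matrix.sub_mul, Matrix.mul_smul, mul_one, Matrix.smul_mul, hDD, hB]
    rwa [h2] at h1
  -- the quadratic form at y vanishes
  have hq0 : y ⬝ᵥ ((lam • (1 : Matrix (Fin n) (Fin n) ℝ) - B) *ᵥ y) = 0 := by
    have hge : 0 ≤ y ⬝ᵥ ((lam • (1 : Matrix (Fin n) (Fin n) ℝ) - B) *ᵥ y) := by
      have := hpsdB.dotProduct_mulVec_nonneg y
      rwa [show star y = y from funext fun i => star_trivial _] at this
    have hle : y ⬝ᵥ ((lam • (1 : Matrix (Fin n) (Fin n) ℝ) - B) *ᵥ y) ≤ 0 := by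
      have expand : ∀ z : Fin n → ℝ,
          z ⬝ᵥ ((lam • (1 : Matrix (Fin n) (Fin n) ℝ) - B) *ᵥ z)
          = lam * (z ⬝ᵥ z) - z ⬝ᵥ (B *ᵥ z) := by
        intro z
        rw [Matrix.sub_mulVec, dotProduct_sub, Matrix.smul_mulVec,
          Matrix.one_mulVec, dotProduct_smul]
        rfl
      rw [expand]
      have h1 : y ⬝ᵥ y = x' ⬝ᵥ x' := Finset.sum_congr rfl fun i _ => hysq i
      have expand2 : ∀ u v : Fin n → ℝ, u ⬝ᵥ (B *ᵥ v) = ∑ i, ∑ j, u i * (B i j * v j) := by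
        intro u v
        simp [dotProduct, Matrix.mulVec, Finset.mul_sum]
      have h2 : x' ⬝ᵥ (B *ᵥ x') ≤ y ⬝ᵥ (B *ᵥ y) := by
        rw [expand2, expand2]
        refine Finset.sum_le_sum fun i _ => ?_
        refine Finset.sum_le_sum fun j _ => ?_
        by_cases hij : i = j
        · subst hij
          refine le_of_eq ?_
          calc x' i * (B i i * x' i) = B i i * (x' i * x' i) := by ring
          _ = B i i * (y i * y i) := by rw [hysq i]
          _ = y i * (B i i * y i) := by ring
        · have hBij := hBoff i j hij
          have e : ∀ a b : ℝ, a * (B i j * b) ≤ |a| * (B i j * |b|) := by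
            intro a b
            calc a * (B i j * b) ≤ |a * (B i j * b)| := le_abs_self _
            _ = |a| * (B i j * |b|) := by
                rw [abs_mul, abs_mul, abs_of_nonneg hBij]
          calc x' i * (B i j * x' j) ≤ |x' i| * (B i j * |x' j|) := e _ _
          _ = y i * (B i j * y j) := by rw [hyabs i, hyabs j]
      have h3 : x' ⬝ᵥ (B *ᵥ x') = lam * (x' ⬝ᵥ x') := by
        rw [hBx', dotProduct_smul]
        rfl
      rw [h1]
      linarith [h2, h3]
    linarith
  have hBy : B *ᵥ y = lam • y := by
    have := (hpsdB.dotProduct_mulVec_zero_iff y).mp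
      (by rwa [show star y = y from funext fun i => star_trivial _])
    have h2 : lam • y - B *ᵥ y = 0 := by
      rw [← this, Matrix.sub_mulVec, Matrix.smul_mulVec, Matrix.one_mulVec]
    have := sub_eq_zero.mp h2
    exact this.symm
  -- zero propagation along edges
  have hprop : ∀ i j, T.Adj i j → y i = 0 → y j = 0 := by
    intro i j hadj hyi
    have h0 : (B *ᵥ y) i = 0 := by rw [hBy]; simp [hyi]
    have hsum : ∑ k, B i k * y k = 0 := h0
    have hterm : ∀ k ∈ Finset.univ, 0 ≤ B i k * y k := by
      intro k _
      by_cases hik : i = k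
      · subst hik; rw [hyi]; simp
      · exact mul_nonneg (hBoff i k hik) (hynn k)
    have := (Finset.sum_eq_zero_iff_of_nonneg hterm).mp hsum j (Finset.mem_univ j)
    rcases mul_eq_zero.mp this with h | h
    · exact absurd h (ne_of_gt (hBadj i j hadj))
    · exact h
  -- conclude
  have hwalk : ∀ (u v : Fin n) (p : T.Walk u v), y u = 0 → y v = 0 := by
    intro u v p
    induction p with
    | nil => exact id
    | cons h q ih => intro hu; exact ih (hprop _ _ h hu)
  intro i hxi
  have hyi : y i = 0 := by rw [hy]; simp [hxi]
  apply hx0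
  funext j
  obtain ⟨p⟩ := hconn.preconnected i j
  exact abs_eq_zero.mp (hwalk i j p hyi)



lemma psd_sub_of_ge (A : Matrix (Fin n) (Fin n) ℝ) (hA : A.IsHermitian) (lam : ℝ)
    (h : ∀ k, lam ≤ hA.eigenvalues k) :
    ((-lam) • (1 : Matrix (Fin n) (Fin n) ℝ) - (-A)).PosSemidef := by
  have hU := Matrix.mem_unitaryGroup_iff.mp (hA.eigenvectorUnitary).2
  have key : (-lam) • (1 : Matrix (Fin n) (Fin n) ℝ) - (-A) =
      (hA.eigenvectorUnitary : Matrix (Fin n) (Fin n) ℝ) *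
        Matrix.diagonal (fun k => hA.eigenvalues k - lam) *
        star (hA.eigenvectorUnitary : Matrix (Fin n) (Fin n) ℝ) := by
    have h0 : (-lam) • (1 : Matrix (Fin n) (Fin n) ℝ) - (-A) = A - lam • 1 := by
      rw [neg_smul, sub_neg_eq_add, neg_add_eq_sub]
    rw [h0]
    conv_lhs => rw [hA.spectral_theorem, Unitary.conjStarAlgAut_apply]
    have h1 : (Matrix.diagonal (fun k => hA.eigenvalues k - lam)) =
        Matrix.diagonal (RCLike.ofReal ∘ hA.eigenvalues) - lam • 1 := by
      ext i j
      by_cases hij : i = j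
      · subst hij; simp
      · simp [Matrix.one_apply_ne hij, Matrix.diagonal_apply_ne _ hij]
    rw [h1, Matrix.mul_sub, Matrix.sub_mul, Matrix.mul_smul, mul_one, Matrix.smul_mul, hU]
  rw [key, Matrix.star_eq_conjTranspose]
  exact (Matrix.PosSemidef.diagonal (fun k => by simpa using h k)).mul_mul_conjTranspose_same _

lemma eig_unique (hn : 0 < n) (T : SimpleGraph (Fin n)) (hconn : T.Connected)
    (A : Matrix (Fin n) (Fin n) ℝ)
    (hedge : ∀ i j, i ≠ j → ¬ T.Adj i j → A i j = 0)
    (s : Fin n → ℝ) (hs1 : ∀ i, s i = 1 ∨ s i = -1)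
    (hpos : ∀ i j, T.Adj i j → 0 < s i * s j * A i j)
    (lam : ℝ) (hpsd : (lam • (1 : Matrix (Fin n) (Fin n) ℝ) - A).PosSemidef)
    (u v : Fin n → ℝ) (hu : A *ᵥ u = lam • u) (hv : A *ᵥ v = lam • v)
    (hu0 : u ≠ 0) (horth : ∑ i, u i * v i = 0) : v = 0 := by
  by_contra hv0
  set i0 : Fin n := ⟨0, hn⟩ with hi0
  have hui := core T hconn A hedge s hs1 hpos lam hpsd u hu hu0 i0
  have hvi := core T hconn A hedge s hs1 hpos lam hpsd v hv hv0 i0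
  set w : Fin n → ℝ := v i0 • u - u i0 • v with hwdef
  have hw : A *ᵥ w = lam • w := by
    rw [hwdef, Matrix.mulVec_sub, Matrix.mulVec_smul, Matrix.mulVec_smul, hu, hv,
      smul_sub, smul_comm (v i0) lam, smul_comm (u i0) lam]
  have hwi0 : w i0 = 0 := by
    rw [hwdef]; simp [mul_comm]
  have hwz : w = 0 := by
    by_contra hw0
    exact core T hconn A hedge s hs1 hpos lam hpsd w hw hw0 i0 hwi0
  have heq : ∀ j, v i0 * u j = u i0 * v j := by
    intro j
    have := congrFun hwz j
    simp [hwdef] at this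
    linarith
  have hsum : v i0 * (∑ j, u j * u j) = u i0 * (∑ j, u j * v j) := by
    rw [Finset.mul_sum, Finset.mul_sum]
    refine Finset.sum_congr rfl fun j _ => ?_
    calc v i0 * (u j * u j) = (v i0 * u j) * u j := by ring
    _ = (u i0 * v j) * u j := by rw [heq j]
    _ = u i0 * (u j * v j) := by ring
  have hupos : 0 < ∑ j, u j * u j :=
    Finset.sum_pos' (fun j _ => mul_self_nonneg _)
      ⟨i0, Finset.mem_univ _, mul_self_pos.mpr hui⟩
  have : v i0 * (∑ j, u j * u j) = 0 := by rw [hsum, horth, mul_zero]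
  rcases mul_eq_zero.mp this with h | h
  · exact hvi h
  · exact absurd h (ne_of_gt hupos)

end TreeSimpleAux

open Matrix Polynomial Finset SimpleGraph in

/-- For a matrix whose graph is a tree, the smallest and largest eigenvalues are
distinct and each has multiplicity 1; in particular at least two eigenvalues of `A`
have multiplicity 1. -/
theorem tree_extreme_eigenvalues_simple
    (n : ℕ) (hn : 2 ≤ n) (T : SimpleGraph (Fin n)) (hT : T.IsTree)
    (A : Matrix (Fin n) (Fin n) ℝ) (hA : A.IsHermitian)
    (hgraph : ∀ i j : Fin n, i ≠ j → (A i j ≠ 0 ↔ T.Adj i j)) :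
    (⨅ i, hA.eigenvalues i) ≠ (⨆ i, hA.eigenvalues i) ∧
    A.charpoly.rootMultiplicity (⨅ i, hA.eigenvalues i) = 1 ∧
    A.charpoly.rootMultiplicity (⨆ i, hA.eigenvalues i) = 1 := by
  classical
  have hconn := hT.isConnected
  obtain ⟨kmax, hkmax, hub⟩ := exists_max hn hA.eigenvalues
  obtain ⟨kmin, hkmin, hlb⟩ := exists_min hn hA.eigenvalues
  set tmax := ⨆ i, hA.eigenvalues i with htmax
  set tmin := ⨅ i, hA.eigenvalues i with htmin
  have hsymmA : ∀ i j, A i j = A j i := by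
    intro i j
    conv_rhs => rw [← hA]
    simp [Matrix.conjTranspose_apply]
  have hedge : ∀ i j : Fin n, i ≠ j → ¬ T.Adj i j → A i j = 0 := by
    intro i j hij hadj
    by_contra h
    exact hadj ((hgraph i j hij).mp h)
  have hedge' : ∀ i j : Fin n, i ≠ j → ¬ T.Adj i j → (-A) i j = 0 := by
    intro i j hij hadj
    rw [Matrix.neg_apply, hedge i j hij hadj, neg_zero]
  have hwnz : ∀ i j, T.Adj i j → A i j ≠ 0 := fun i j h => (hgraph i j h.ne).mpr h
  obtain ⟨s₁, hs₁, hpos₁⟩ := exists_sign T hT A hwnz hsymmA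
  obtain ⟨s₂, hs₂, hpos₂⟩ := exists_sign T hT (fun i j => -A i j)
      (fun i j h => neg_ne_zero.mpr (hwnz i j h)) (fun i j => by show -A i j = -A j i; rw [hsymmA i j])
  have hpos₂' : ∀ i j, T.Adj i j → 0 < s₂ i * s₂ j * (-A) i j := by
    intro i j h
    simpa using hpos₂ i j h
  have hn0 : 0 < n := lt_of_lt_of_le two_pos hn
  have hpsdmax := psd_sub_of_le A hA tmax hub
  have hpsdmin := psd_sub_of_ge A hA tmin hlb
  -- basic eigenvector facts
  have hvec : ∀ k : Fin n, A *ᵥ ⇑(hA.eigenvectorBasis k) = hA.eigenvalues k • ⇑(hA.eigenvectorBasis k) :=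
    hA.mulVec_eigenvectorBasis
  have hvne : ∀ k : Fin n, (⇑(hA.eigenvectorBasis k) : Fin n → ℝ) ≠ 0 := by
    intro k h
    exact hA.eigenvectorBasis.orthonormal.ne_zero k (by ext i; exact congrFun h i)
  have horth : ∀ k l : Fin n, k ≠ l →
      ∑ i, (⇑(hA.eigenvectorBasis k) : Fin n → ℝ) i * (⇑(hA.eigenvectorBasis l) : Fin n → ℝ) i = 0 := by
    intro k l hkl
    have h2 := hA.eigenvectorBasis.orthonormal.2 hkl
    simpa [PiLp.inner_apply, RCLike.inner_apply, conj_trivial, mul_comm] using h2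
  -- multiplicity-one counting for the max
  have hcardmax : (Finset.univ.filter (fun i => hA.eigenvalues i = tmax)).card = 1 := by
    have hle : (Finset.univ.filter (fun i => hA.eigenvalues i = tmax)).card ≤ 1 := by
      refine Finset.card_le_one.mpr ?_
      intro k hk l hl
      simp only [Finset.mem_filter] at hk hl
      by_contra hkl
      have hu : A *ᵥ ⇑(hA.eigenvectorBasis k) = tmax • ⇑(hA.eigenvectorBasis k) := by
        rw [hvec k, hk.2]
      have hv : A *ᵥ ⇑(hA.eigenvectorBasis l) = tmax • ⇑(hA.eigenvectorBasis l) := by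
        rw [hvec l, hl.2]
      exact hvne l (eig_unique hn0 T hconn A hedge s₁ hs₁ hpos₁ tmax hpsdmax _ _
        hu hv (hvne k) (horth k l hkl))
    have hge : 0 < (Finset.univ.filter (fun i => hA.eigenvalues i = tmax)).card :=
      Finset.card_pos.mpr ⟨kmax, Finset.mem_filter.mpr ⟨Finset.mem_univ _, hkmax⟩⟩
    omega
  -- multiplicity-one counting for the min
  have hcardmin : (Finset.univ.filter (fun i => hA.eigenvalues i = tmin)).card = 1 := by
    have hle : (Finset.univ.filter (fun i => hA.eigenvalues i = tmin)).card ≤ 1 := by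
      refine Finset.card_le_one.mpr ?_
      intro k hk l hl
      simp only [Finset.mem_filter] at hk hl
      by_contra hkl
      have hu : (-A) *ᵥ ⇑(hA.eigenvectorBasis k) = (-tmin) • ⇑(hA.eigenvectorBasis k) := by
        rw [Matrix.neg_mulVec, hvec k, hk.2, neg_smul]
      have hv : (-A) *ᵥ ⇑(hA.eigenvectorBasis l) = (-tmin) • ⇑(hA.eigenvectorBasis l) := by
        rw [Matrix.neg_mulVec, hvec l, hl.2, neg_smul]
      exact hvne l (eig_unique hn0 T hconn (-A) hedge' s₂ hs₂ hpos₂' (-tmin) hpsdmin _ _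
        hu hv (hvne k) (horth k l hkl))
    have hge : 0 < (Finset.univ.filter (fun i => hA.eigenvalues i = tmin)).card :=
      Finset.card_pos.mpr ⟨kmin, Finset.mem_filter.mpr ⟨Finset.mem_univ _, hkmin⟩⟩
    omega
  -- distinctness
  have hne : tmin ≠ tmax := by
    intro h
    have hall : ∀ k, hA.eigenvalues k = tmax := fun k => le_antisymm (hub k) (h ▸ hlb k)
    have : (Finset.univ.filter (fun i => hA.eigenvalues i = tmax)) = Finset.univ :=
      Finset.filter_true_of_mem (fun i _ => hall i)
    rw [this, Finset.card_univ, Fintype.card_fin] at hcardmax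
    omega
  refine ⟨hne, ?_, ?_⟩
  · rw [charpoly_eq_prod A hA, rootMult_prod]
    exact hcardmin
  · rw [charpoly_eq_prod A hA, rootMult_prod]
    exact hcardmax
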